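/- The function γ0(x) = ∫_ℝ (n0(y)+f0(y+x))·y²·sgn(y) dy is strictly positive for all real x. -/

import Mathlib

open MeasureTheory Real

noncomputable def f0 (x : ℝ) : ℝ := 1 / (Real.exp x + 1)
noncomputable def n0 (y : ℝ) : ℝ := 1 / (Real.exp y - 1)
noncomputable def w (x : ℝ) : ℝ := f0 x * (1 - f0 x)
noncomputable def k0 (x y : ℝ) : ℝ := (n0 y + f0 (y + x)) * y ^ 2 * Real.sign y
noncomputable def K0bar (e u : ℝ) : ℝ := (n0 (u - e) + f0 u) * (u - e) ^ 2 * Real.sign (u - e)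
noncomputable def Gamma0 (e : ℝ) : ℝ := ∫ u, K0bar e u
noncomputable def gamma0 (x : ℝ) : ℝ := ∫ y, k0 x y

section Aux
open Set


lemma aux1 {y : ℝ} (hy : 0 < y) : y ^ 2 * n0 y ≤ 8 * Real.exp (-(y/4)) := by
  set t := Real.exp (y/4) with ht
  have ht1 : y/4 + 1 ≤ t := Real.add_one_le_exp _
  have ht0 : 0 < t := Real.exp_pos _
  have h4 : Real.exp y = t ^ 4 := by rw [ht, ← Real.exp_nat_mul]; ring_nf
  have he1 : 1 < Real.exp y := Real.one_lt_exp_iff.mpr hy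
  have hneg : Real.exp (-(y/4)) = 1 / t := by rw [Real.exp_neg, one_div]
  rw [n0, hneg, mul_one_div, mul_one_div, div_le_div_iff₀ (by linarith) ht0, h4]
  nlinarith [sq_nonneg (t - 1), sq_nonneg t, sq_nonneg (y - 4*t + 4), mul_pos ht0 ht0,
    mul_nonneg (mul_nonneg ht0.le ht0.le) ht0.le, sq_nonneg (t*(t-1))]

lemma aux2 {y : ℝ} (hy : 0 ≤ y) : y ^ 2 ≤ 16 * Real.exp (y/2) := by
  have ht1 : y/4 + 1 ≤ Real.exp (y/4) := Real.add_one_le_exp _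
  have h2 : Real.exp (y/2) = Real.exp (y/4) ^ 2 := by rw [← Real.exp_nat_mul]; ring_nf
  nlinarith [Real.exp_pos (y/4)]

lemma f0_le (u : ℝ) : f0 u ≤ Real.exp (-u) := by
  rw [f0, Real.exp_neg, one_div]
  exact inv_anti₀ (Real.exp_pos u) (by linarith)

lemma f0_pos (u : ℝ) : 0 < f0 u := by rw [f0]; positivity

lemma f0_lt_one (u : ℝ) : f0 u < 1 := by
  rw [f0, div_lt_one (by positivity)]; linarith [Real.exp_pos u]

lemma one_sub_f0_le (u : ℝ) : 1 - f0 u ≤ Real.exp u := by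
  have h : 1 - f0 u = Real.exp u / (Real.exp u + 1) := by
    rw [f0]; field_simp; ring
  rw [h]
  exact div_le_self (Real.exp_pos u).le (by linarith [Real.exp_pos u])

lemma n0_neg_eq {y : ℝ} (hy : y ≠ 0) : n0 (-y) = -1 - n0 y := by
  have h1 : Real.exp y - 1 ≠ 0 := by
    intro h; exact hy ((Real.exp_eq_one_iff y).mp (by linarith))
  have h2 : Real.exp y ≠ 0 := (Real.exp_pos y).ne'
  rw [n0, n0, Real.exp_neg]
  have h3 : (Real.exp y)⁻¹ - 1 ≠ 0 := by
    intro h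
    have : (Real.exp y)⁻¹ = 1 := by linarith
    have : Real.exp y = 1 := by field_simp at this; linarith
    exact hy ((Real.exp_eq_one_iff y).mp this)
  have h4 : 1 - Real.exp y ≠ 0 := fun h => h1 (by linarith)
  field_simp
  ring


lemma n0_pos {y : ℝ} (hy : 0 < y) : 0 < n0 y := by
  rw [n0]
  exact div_pos one_pos (sub_pos.mpr (Real.one_lt_exp_iff.mpr hy))

lemma n0_le_neg_one {y : ℝ} (hy : y < 0) : n0 y ≤ -1 := by
  have h1 : Real.exp y - 1 < 0 := sub_neg.mpr (Real.exp_lt_one_iff.mpr hy)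
  rw [n0, div_le_iff_of_neg h1]
  nlinarith [Real.exp_pos y]

lemma k0_pos (x : ℝ) {y : ℝ} (hy : 0 < y) : 0 < k0 x y := by
  rw [k0, Real.sign_of_pos hy, mul_one]
  exact mul_pos (add_pos (n0_pos hy) (f0_pos _)) (by positivity)

lemma k0_nonneg (x y : ℝ) : 0 ≤ k0 x y := by
  rcases lt_trichotomy y 0 with h | h | h
  · rw [k0, Real.sign_of_neg h]
    have h1 := n0_le_neg_one h
    have h2 := f0_lt_one (y + x)
    nlinarith [sq_nonneg y]
  · simp [k0, h]
  · exact (k0_pos x h).le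

lemma k0_bound_pos (x : ℝ) {y : ℝ} (hy : 0 < y) :
    k0 x y ≤ 8 * Real.exp (-(y/4)) + 16 * Real.exp (-x) * Real.exp (-(y/2)) := by
  rw [k0, Real.sign_of_pos hy, mul_one, add_mul]
  have h1 : n0 y * y ^ 2 ≤ 8 * Real.exp (-(y/4)) := by
    have := aux1 hy; linarith [this]
  have h2 : f0 (y + x) * y ^ 2 ≤ 16 * Real.exp (-x) * Real.exp (-(y/2)) := by
    have ha := aux2 hy.le
    have hb := f0_le (y + x)
    have hc : y ^ 2 * f0 (y + x) ≤ 16 * Real.exp (y/2) * Real.exp (-(y+x)) :=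
      mul_le_mul ha hb (f0_pos _).le (by positivity)
    have hd : 16 * Real.exp (y/2) * Real.exp (-(y+x)) =
        16 * Real.exp (-x) * Real.exp (-(y/2)) := by
      rw [mul_assoc, mul_assoc, ← Real.exp_add, ← Real.exp_add]
      ring_nf
    linarith [hc, hd ▸ hc]
  linarith [mul_comm (n0 y) (y ^ 2), mul_comm (f0 (y + x)) (y ^ 2)]

lemma k0_bound_neg (x : ℝ) {y : ℝ} (hy : y < 0) :
    k0 x y ≤ 8 * Real.exp (y/4) + 16 * Real.exp x * Real.exp (y/2) := by
  have hny : 0 < -y := neg_pos.mpr hy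
  rw [k0, Real.sign_of_neg hy]
  have hid : (n0 y + f0 (y + x)) * y ^ 2 * (-1) =
      n0 (-y) * y ^ 2 + (1 - f0 (y + x)) * y ^ 2 := by
    rw [n0_neg_eq hy.ne]; ring
  rw [hid]
  have h1 : n0 (-y) * y ^ 2 ≤ 8 * Real.exp (y/4) := by
    have := aux1 hny
    rw [neg_div, neg_neg] at this
    nlinarith [this, sq_nonneg y]
  have h2 : (1 - f0 (y + x)) * y ^ 2 ≤ 16 * Real.exp x * Real.exp (y/2) := by
    have ha : y ^ 2 ≤ 16 * Real.exp (-y/2) := by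
      nlinarith [aux2 hny.le]
    have hb := one_sub_f0_le (y + x)
    have hc : (1 - f0 (y + x)) * y ^ 2 ≤ Real.exp (y + x) * (16 * Real.exp (-y/2)) := by
      have h0 : 0 ≤ 1 - f0 (y + x) := by linarith [f0_lt_one (y + x)]
      exact mul_le_mul hb ha (sq_nonneg y) (Real.exp_pos _).le
    have hd : Real.exp (y + x) * (16 * Real.exp (-y/2)) =
        16 * Real.exp x * Real.exp (y/2) := by
      rw [mul_comm, mul_assoc, mul_assoc, ← Real.exp_add, ← Real.exp_add]
      ring_nf
    linarith [hd ▸ hc]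
  linarith

lemma measurable_sign : Measurable Real.sign := by
  have h : Real.sign = fun r : ℝ => if r < 0 then (-1 : ℝ) else if 0 < r then 1 else 0 := by
    funext r; rfl
  rw [h]
  exact Measurable.ite measurableSet_Iio measurable_const
    (Measurable.ite measurableSet_Ioi measurable_const measurable_const)

lemma measurable_k0 (x : ℝ) : Measurable (k0 x) := by
  unfold k0 n0 f0
  exact (((measurable_const.div (Real.measurable_exp.sub measurable_const)).add
    (measurable_const.div ((Real.measurable_exp.comp (measurable_id.add_const x)).add
      measurable_const))).mul (measurable_id.pow_const 2)).mul measurable_sign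

lemma myIntegrableOn_exp_Iic {b : ℝ} (hb : 0 < b) (c : ℝ) :
    IntegrableOn (fun y : ℝ => Real.exp (b * y)) (Iic c) := by
  have h : IntegrableOn (fun y : ℝ => Real.exp (-b * y)) (Ioi (-c)) :=
    exp_neg_integrableOn_Ioi _ hb
  have h_map : ((volume : Measure ℝ).restrict (Ioi (-c))).map Neg.neg
      = volume.restrict (Iio c) := by
    conv => rhs; rw [← Measure.map_neg_eq_self (volume : Measure ℝ),
      measurableEmbedding_neg.restrict_map]
    simp
  rw [IntegrableOn, ← Measure.restrict_congr_set Iio_ae_eq_Iic, ← h_map,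
    measurableEmbedding_neg.integrable_map_iff]
  have heq : ((fun y : ℝ => Real.exp (b * y)) ∘ Neg.neg) = fun y : ℝ => Real.exp (-b * y) := by
    funext y; simp [Function.comp, mul_neg, neg_mul]
  rw [heq]
  exact h

lemma integrable_k0 (x : ℝ) : Integrable (k0 x) := by
  rw [← integrableOn_univ, ← Set.Iic_union_Ioi (a := (0:ℝ)), integrableOn_union]
  constructor
  · have hg : IntegrableOn (fun y : ℝ => 8 * Real.exp (4⁻¹ * y) + 16 * Real.exp x * Real.exp (2⁻¹ * y)) (Iic 0) :=
      ((myIntegrableOn_exp_Iic (by norm_num) 0).const_mul 8).add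
        ((myIntegrableOn_exp_Iic (by norm_num) 0).const_mul (16 * Real.exp x))
    refine Integrable.mono hg ((measurable_k0 x).aestronglyMeasurable.restrict) ?_
    rw [ae_restrict_iff' measurableSet_Iic]
    refine Filter.Eventually.of_forall fun y hy => ?_
    have hnn := k0_nonneg x y
    rw [Real.norm_eq_abs, abs_of_nonneg hnn]
    refine le_trans ?_ (le_abs_self _)
    rcases lt_or_eq_of_le (show y ≤ 0 from hy) with h | h
    · have := k0_bound_neg x h
      have e1 : Real.exp (y/4) = Real.exp (4⁻¹ * y) := by ring_nf
      have e2 : Real.exp (y/2) = Real.exp (2⁻¹ * y) := by ring_nf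
      rw [e1, e2] at this
      linarith
    · subst h
      simp [k0]
      positivity
  · have hg : IntegrableOn (fun y : ℝ => 8 * Real.exp (-(4⁻¹) * y) + 16 * Real.exp (-x) * Real.exp (-(2⁻¹) * y)) (Ioi 0) :=
      ((exp_neg_integrableOn_Ioi 0 (by norm_num)).const_mul 8).add
        ((exp_neg_integrableOn_Ioi 0 (by norm_num)).const_mul (16 * Real.exp (-x)))
    refine Integrable.mono hg ((measurable_k0 x).aestronglyMeasurable.restrict) ?_
    rw [ae_restrict_iff' measurableSet_Ioi]
    refine Filter.Eventually.of_forall fun y hy => ?_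
    have hnn := k0_nonneg x y
    rw [Real.norm_eq_abs, abs_of_nonneg hnn]
    refine le_trans ?_ (le_abs_self _)
    have := k0_bound_pos x (show 0 < y from hy)
    have e1 : Real.exp (-(y/4)) = Real.exp (-(4⁻¹) * y) := by ring_nf
    have e2 : Real.exp (-(y/2)) = Real.exp (-(2⁻¹) * y) := by ring_nf
    rw [e1, e2] at this
    linarith



theorem gamma0_pos (x : ℝ) : 0 < gamma0 x := by
  rw [gamma0]
  rw [integral_pos_iff_support_of_nonneg (k0_nonneg x) (integrable_k0 x)]
  have hsub : Set.Ioi (0:ℝ) ⊆ Function.support (k0 x) := fun y hy => (k0_pos x hy).ne'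
  refine lt_of_lt_of_le ?_ (measure_mono hsub)
  rw [Real.volume_Ioi]
  exact ENNReal.zero_lt_top

end Aux
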